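/- Let T be a theory extending PA with a unary predicate B satisfying, for all sentences F, G: (K) B(⌜F→G⌝) → (B(⌜F⌝) → B(⌜G⌝)), (4) B(⌜F⌝) → B(⌜B(⌜F⌝)⌝), (D) B(⌜¬F⌝) → ¬B(⌜F⌝), and (Nec) T ⊢ F implies T ⊢ B(⌜F⌝). Then T is inconsistent. -/
import Mathlib


/-- Formulas of an abstract language with an operator `B` ("belief predicate"). -/
inductive Fm : Type
  | atom : ℕ → Fm
  | bot : Fm
  | imp : Fm → Fm → Fm
  | B : Fm → Fm

namespace Fm

def neg (A : Fm) : Fm := imp A bot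
def conj (A B : Fm) : Fm := neg (imp A (neg B))
def iff' (A B : Fm) : Fm := conj (imp A B) (imp B A)

end Fm

open Fm

/-- The Believer Paradox: a theory closed under propositional consequence with a
belief operator `B` satisfying schemes K, 4, D and the necessitation rule,
together with a diagonal sentence `D ↔ ¬B D` (as supplied by the Fixed Point
Lemma in any theory extending PA), is inconsistent. -/
theorem believer_paradox
    (Prov : Fm → Prop)
    (ax1 : ∀ A B, Prov (imp A (imp B A)))
    (ax2 : ∀ A B C, Prov (imp (imp A (imp B C)) (imp (imp A B) (imp A C))))
    (ax3 : ∀ A B, Prov (imp (imp (neg A) (neg B)) (imp B A)))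
    (mp : ∀ A B, Prov (imp A B) → Prov A → Prov B)
    (hK : ∀ F G, Prov (imp (B (imp F G)) (imp (B F) (B G))))
    (h4 : ∀ F, Prov (imp (B F) (B (B F))))
    (hD : ∀ F, Prov (imp (B (neg F)) (neg (B F))))
    (hNec : ∀ F, Prov F → Prov (B F))
    (D : Fm) (hdiag : Prov (iff' D (neg (B D)))) :
    Prov bot := by
  -- identity
  have hid : ∀ A, Prov (imp A A) := fun A =>
    mp _ _ (mp _ _ (ax2 A (imp A A) A) (ax1 A (imp A A))) (ax1 A A)
  -- lifting: from ⊢ B→C get ⊢ (A→B)→(A→C)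
  have lift : ∀ A BB C, Prov (imp BB C) → Prov (imp (imp A BB) (imp A C)) :=
    fun A BB C h =>
      mp _ _ (ax2 A BB C) (mp _ _ (ax1 (imp BB C) A) h)
  -- transitivity of provable implications
  have trans : ∀ A BB C, Prov (imp A BB) → Prov (imp BB C) → Prov (imp A C) :=
    fun A BB C hab hbc => mp _ _ (lift A BB C hbc) hab
  -- flip: ⊢ A→(B→C) gives ⊢ B→(A→C)
  have flip : ∀ A BB C, Prov (imp A (imp BB C)) → Prov (imp BB (imp A C)) :=
    fun A BB C h =>
      trans BB (imp A BB) (imp A C) (ax1 BB A) (mp _ _ (ax2 A BB C) h)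
  -- ex falso: ⊢ ⊥→C
  have efq : ∀ C, Prov (imp bot C) :=
    fun C =>
      mp _ _ (ax3 C bot) (mp _ _ (ax1 (neg bot) (neg C)) (hid bot))
  -- ⊢ X → ¬¬X
  have dni : ∀ X, Prov (imp X (neg (neg X))) :=
    fun X => flip (neg X) X bot (hid (neg X))
  -- ⊢ ¬¬X → X
  have dne : ∀ X, Prov (imp (neg (neg X)) X) :=
    fun X => mp _ _ (ax3 X (neg (neg X))) (dni (neg X))
  -- conjunction eliminations
  have conjl : ∀ A BB, Prov (conj A BB) → Prov A := by
    intro A BB h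
    have s1 : Prov (imp (neg A) (imp A (neg BB))) := lift A bot (neg BB) (efq (neg BB))
    have s2 : Prov (neg (neg A)) := trans _ _ _ s1 h
    exact mp _ _ (dne A) s2
  have conjr : ∀ A BB, Prov (conj A BB) → Prov BB := by
    intro A BB h
    have s2 : Prov (neg (neg BB)) := trans _ _ _ (ax1 (neg BB) A) h
    exact mp _ _ (dne BB) s2
  -- extract both directions of the diagonal equivalence
  have d1 : Prov (imp D (neg (B D))) := conjl _ _ hdiag
  have d2 : Prov (imp (neg (B D)) D) := conjr _ _ hdiag
  -- necessitation and K
  have n1 : Prov (B (imp D (neg (B D)))) := hNec _ d1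
  have k1 : Prov (imp (B D) (B (neg (B D)))) := mp _ _ (hK D (neg (B D))) n1
  have c1 : Prov (imp (B D) (neg (B (B D)))) := trans _ _ _ k1 (hD (B D))
  -- B D → ⊥
  have notBD : Prov (neg (B D)) :=
    mp _ _ (mp _ _ (ax2 (B D) (B (B D)) bot) c1) (h4 D)
  have pd : Prov D := mp _ _ d2 notBD
  exact mp _ _ notBD (hNec _ pd)
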